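/- Let α, β ∈ IEnd(P_n) and let I₁,…,I_k and I′₁,…,I′_l be the maximal intervals of Dom α and Dom β respectively. Then α L β in IEnd(P_n) if and only if {α(I₁),…,α(I_k)} = {β(I′₁),…,β(I′_l)} as sets of subsets of {1,…,n}. -/

import Mathlib

open scoped Classical

/-- `adj u v` means `|u - v| = 1`, i.e. `u` and `v` are adjacent in the path. -/
def adj (u v : ℕ) : Prop := u + 1 = v ∨ v + 1 = u

/-- `f` is an injective partial endomorphism of the path `P_n` on `{1,…,n}`. -/
structure IsIEnd (n : ℕ) (f : ℕ →. ℕ) : Prop where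
  dom_subset : f.Dom ⊆ Set.Icc 1 n
  ran_subset : f.ran ⊆ Set.Icc 1 n
  inj : ∀ ⦃x y a : ℕ⦄, a ∈ f x → a ∈ f y → x = y
  edge : ∀ ⦃u v a b : ℕ⦄, a ∈ f u → b ∈ f v → adj u v → adj a b

/-- `f` is a partial automorphism of the path `P_n`. -/
def IsPAut (n : ℕ) (f : ℕ →. ℕ) : Prop :=
  IsIEnd n f ∧ ∀ ⦃u v a b : ℕ⦄, a ∈ f u → b ∈ f v → adj a b → adj u v

/-- Left-to-right composition of partial maps: `x (pcomp f g) = (x f) g`. -/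
def pcomp (f g : ℕ →. ℕ) : ℕ →. ℕ := PFun.comp g f

/-- The inverse of an injective partial map. -/
noncomputable def pinv (f : ℕ →. ℕ) : ℕ →. ℕ :=
  fun y => ⟨∃ x, y ∈ f x, fun h => h.choose⟩

/-- `I` is an interval of `X`: a set of consecutive integers contained in `X`. -/
def IsIntervalOf (I X : Set ℕ) : Prop :=
  I ⊆ X ∧ ∀ ⦃x⦄, x ∈ I → ∀ ⦃y⦄, y ∈ I → ∀ ⦃z : ℕ⦄, x < z → z < y → z ∈ I

/-- `I` is a maximal interval of `X`. -/
def IsMaxIntervalOf (I X : Set ℕ) : Prop :=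
  IsIntervalOf I X ∧ ∀ J, IsIntervalOf J X → I ⊆ J → I = J

/-! ### Auxiliary lemmas -/

lemma mem_pcomp {f g : ℕ →. ℕ} {x a : ℕ} : a ∈ pcomp f g x ↔ ∃ c ∈ f x, a ∈ g c := by
  simp [pcomp, PFun.comp_apply, Part.mem_bind_iff]
  exact Part.mem_bind_iff

lemma pinv_spec {f : ℕ →. ℕ} {a c : ℕ} (h : c ∈ pinv f a) : a ∈ f c := by
  obtain ⟨h', rfl⟩ := h
  exact h'.choose_spec

lemma mem_pinv_of {f : ℕ →. ℕ} {a : ℕ} (h : ∃ x, a ∈ f x) : h.choose ∈ pinv f a :=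
  ⟨h, rfl⟩

/-- The maximal interval of `X` around a point `x ∈ X`. -/
def MInt (X : Set ℕ) (x : ℕ) : Set ℕ := {z | Set.Icc (min x z) (max x z) ⊆ X}

lemma mem_MInt_self {X : Set ℕ} {x : ℕ} (hx : x ∈ X) : x ∈ MInt X x := by
  intro w hw
  simp only [min_self, max_self, Set.mem_Icc] at hw
  have : w = x := le_antisymm hw.2 hw.1
  rwa [this]

lemma isInterval_MInt {X : Set ℕ} {x : ℕ} (hx : x ∈ X) : IsIntervalOf (MInt X x) X := by
  constructor
  · intro z hz
    exact hz ⟨min_le_right _ _, le_max_right _ _⟩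
  · intro u hu v hv z huz hzv w hw
    simp only [Set.mem_Icc] at hw
    have h1 : (min x u ≤ w ∧ w ≤ max x u) ∨ (min x v ≤ w ∧ w ≤ max x v) := by omega
    rcases h1 with h | h
    · exact hu ⟨h.1, h.2⟩
    · exact hv ⟨h.1, h.2⟩

lemma subset_MInt {X K : Set ℕ} {x : ℕ} (hK : IsIntervalOf K X) (hx : x ∈ K) :
    K ⊆ MInt X x := by
  intro z hz w hw
  simp only [Set.mem_Icc] at hw
  rcases eq_or_ne w x with rfl | hwx
  · exact hK.1 hx
  rcases eq_or_ne w z with rfl | hwz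
  · exact hK.1 hz
  have : (x < w ∧ w < z) ∨ (z < w ∧ w < x) := by omega
  rcases this with h | h
  · exact hK.1 (hK.2 hx hz h.1 h.2)
  · exact hK.1 (hK.2 hz hx h.1 h.2)

lemma isMax_MInt {X : Set ℕ} {x : ℕ} (hx : x ∈ X) : IsMaxIntervalOf (MInt X x) X := by
  refine ⟨isInterval_MInt hx, fun J hJ hsub => ?_⟩
  refine Set.Subset.antisymm hsub (subset_MInt hJ (hsub (mem_MInt_self hx)))

/-- On a run of consecutive points of the domain, an injective edge-preserving map
is an arithmetic progression with step `+1` or `-1`. -/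
lemma prog {f : ℕ →. ℕ} (hinj : ∀ ⦃x y a : ℕ⦄, a ∈ f x → a ∈ f y → x = y)
    (hedge : ∀ ⦃u v a b : ℕ⦄, a ∈ f u → b ∈ f v → adj u v → adj a b)
    {x a : ℕ} (ha : a ∈ f x) :
    ∀ d : ℕ, (∀ j ≤ d, x + j ∈ f.Dom) →
      (∀ j ≤ d, ∀ c, c ∈ f (x + j) → c = a + j) ∨
      (∀ j ≤ d, ∀ c, c ∈ f (x + j) → c + j = a) := by
  intro d
  induction d with
  | zero =>
    intro _
    left
    intro j hj c hc
    have hj0 : j = 0 := by omega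
    subst hj0
    have : c = a := Part.mem_unique hc (by simpa using ha)
    omega
  | succ d ih =>
    intro hdom
    have hdom' : ∀ j ≤ d, x + j ∈ f.Dom := fun j hj => hdom j (by omega)
    obtain ⟨ad, had⟩ := (PFun.mem_dom f _).mp (hdom d (by omega))
    obtain ⟨ad1, had1⟩ := (PFun.mem_dom f _).mp (hdom (d + 1) le_rfl)
    have hadj : adj ad ad1 := hedge had had1 (Or.inl rfl)
    rcases ih hdom' with H | H
    · have hd : ad = a + d := H d le_rfl _ had
      rcases hadj with h | h
      · -- ad + 1 = ad1
        left
        intro j hj c hc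
        rcases Nat.lt_or_ge j (d + 1) with hj' | hj'
        · exact H j (by omega) c hc
        · have hje : j = d + 1 := by omega
          subst hje
          have : c = ad1 := Part.mem_unique hc had1
          omega
      · -- ad1 + 1 = ad
        by_cases hd0 : d = 0
        · subst hd0
          right
          intro j hj c hc
          rcases Nat.le_one_iff_eq_zero_or_eq_one.mp hj with rfl | rfl
          · have : c = a := Part.mem_unique hc (by simpa using ha)
            omega
          · have : c = ad1 := Part.mem_unique hc had1
            omega
        · exfalso
          obtain ⟨c, hc⟩ := (PFun.mem_dom f _).mp (hdom' (d - 1) (by omega))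
          have hcv : c = a + (d - 1) := H (d - 1) (by omega) c hc
          have hce : c = ad1 := by omega
          subst hce
          have := hinj hc had1
          omega
    · have hd : ad + d = a := H d le_rfl _ had
      rcases hadj with h | h
      · -- ad + 1 = ad1
        by_cases hd0 : d = 0
        · subst hd0
          left
          intro j hj c hc
          rcases Nat.le_one_iff_eq_zero_or_eq_one.mp hj with rfl | rfl
          · have : c = a := Part.mem_unique hc (by simpa using ha)
            omega
          · have : c = ad1 := Part.mem_unique hc had1
            omega
        · exfalso
          obtain ⟨c, hc⟩ := (PFun.mem_dom f _).mp (hdom' (d - 1) (by omega))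
          have hcv : c + (d - 1) = a := H (d - 1) (by omega) c hc
          have hce : c = ad1 := by omega
          subst hce
          have := hinj hc had1
          omega
      · -- ad1 + 1 = ad
        right
        intro j hj c hc
        rcases Nat.lt_or_ge j (d + 1) with hj' | hj'
        · exact H j (by omega) c hc
        · have hje : j = d + 1 := by omega
          subst hje
          have : c = ad1 := Part.mem_unique hc had1
          omega

lemma interval_dom {f : ℕ →. ℕ} {I : Set ℕ} (hI : IsIntervalOf I f.Dom)
    {x y : ℕ} (hx : x ∈ I) (hy : y ∈ I) (hxy : x ≤ y) :
    ∀ j ≤ y - x, x + j ∈ f.Dom := by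
  intro j hj
  rcases eq_or_ne j 0 with rfl | hj0
  · simpa using hI.1 hx
  rcases eq_or_ne (x + j) y with he | hne
  · rw [he]; exact hI.1 hy
  · exact hI.1 (hI.2 hx hy (by omega) (by omega))

lemma isom_le {f : ℕ →. ℕ} (hinj : ∀ ⦃x y a : ℕ⦄, a ∈ f x → a ∈ f y → x = y)
    (hedge : ∀ ⦃u v a b : ℕ⦄, a ∈ f u → b ∈ f v → adj u v → adj a b)
    {I : Set ℕ} (hI : IsIntervalOf I f.Dom)
    {x y a b : ℕ} (hx : x ∈ I) (hy : y ∈ I) (ha : a ∈ f x) (hb : b ∈ f y)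
    (hxy : x ≤ y) : a + y = b + x ∨ a + x = b + y := by
  have hdom := interval_dom hI hx hy hxy
  have hb' : b ∈ f (x + (y - x)) := by rw [show x + (y - x) = y by omega]; exact hb
  rcases prog hinj hedge ha (y - x) hdom with H | H
  · have := H (y - x) le_rfl b hb'
    left; omega
  · have := H (y - x) le_rfl b hb'
    right; omega

lemma isom {f : ℕ →. ℕ} (hinj : ∀ ⦃x y a : ℕ⦄, a ∈ f x → a ∈ f y → x = y)
    (hedge : ∀ ⦃u v a b : ℕ⦄, a ∈ f u → b ∈ f v → adj u v → adj a b)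
    {I : Set ℕ} (hI : IsIntervalOf I f.Dom)
    {x y a b : ℕ} (hx : x ∈ I) (hy : y ∈ I) (ha : a ∈ f x) (hb : b ∈ f y) :
    a + y = b + x ∨ a + x = b + y := by
  rcases le_total x y with h | h
  · exact isom_le hinj hedge hI hx hy ha hb h
  · rcases isom_le hinj hedge hI hy hx hb ha h with H | H
    · left; omega
    · right; omega

lemma adj_reflect {f : ℕ →. ℕ} (hinj : ∀ ⦃x y a : ℕ⦄, a ∈ f x → a ∈ f y → x = y)
    (hedge : ∀ ⦃u v a b : ℕ⦄, a ∈ f u → b ∈ f v → adj u v → adj a b)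
    {I : Set ℕ} (hI : IsIntervalOf I f.Dom)
    {x y a b : ℕ} (hx : x ∈ I) (hy : y ∈ I) (ha : a ∈ f x) (hb : b ∈ f y)
    (hab : adj a b) : adj x y := by
  have h := isom hinj hedge hI hx hy ha hb
  rcases hab with h1 | h1 <;> rcases h with h2 | h2 <;>
    first
      | exact Or.inl (by omega)
      | exact Or.inr (by omega)

lemma image_between_le {f : ℕ →. ℕ} (hinj : ∀ ⦃x y a : ℕ⦄, a ∈ f x → a ∈ f y → x = y)
    (hedge : ∀ ⦃u v a b : ℕ⦄, a ∈ f u → b ∈ f v → adj u v → adj a b)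
    {I : Set ℕ} (hI : IsIntervalOf I f.Dom)
    {x1 x2 c1 c2 z : ℕ} (hx1 : x1 ∈ I) (hx2 : x2 ∈ I) (hc1 : c1 ∈ f x1) (hc2 : c2 ∈ f x2)
    (hle : x1 ≤ x2) (hz : (c1 < z ∧ z < c2) ∨ (c2 < z ∧ z < c1)) :
    z ∈ f.image I := by
  set d := x2 - x1 with hd
  have hdom := interval_dom hI hx1 hx2 hle
  have hc2' : c2 ∈ f (x1 + d) := by rw [show x1 + d = x2 by omega]; exact hc2
  have memI : ∀ j ≤ d, x1 + j ∈ I := by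
    intro j hj
    rcases eq_or_ne j 0 with rfl | hj0
    · simpa using hx1
    rcases eq_or_ne (x1 + j) x2 with he | hne
    · rw [he]; exact hx2
    · exact hI.2 hx1 hx2 (by omega) (by omega)
  rcases prog hinj hedge hc1 d hdom with H | H
  · have h2 : c2 = c1 + d := H d le_rfl c2 hc2'
    have hzc : c1 < z ∧ z < c2 := by omega
    set j := z - c1 with hj
    have hjd : j ≤ d := by omega
    obtain ⟨c, hc⟩ := (PFun.mem_dom f _).mp (hdom j hjd)
    have : c = c1 + j := H j hjd c hc
    have hcz : c = z := by omega
    exact (PFun.mem_image f z I).mpr ⟨x1 + j, memI j hjd, hcz ▸ hc⟩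
  · have h2 : c2 + d = c1 := H d le_rfl c2 hc2'
    have hzc : c2 < z ∧ z < c1 := by omega
    set j := c1 - z with hj
    have hjd : j ≤ d := by omega
    obtain ⟨c, hc⟩ := (PFun.mem_dom f _).mp (hdom j hjd)
    have : c + j = c1 := H j hjd c hc
    have hcz : c = z := by omega
    exact (PFun.mem_image f z I).mpr ⟨x1 + j, memI j hjd, hcz ▸ hc⟩

lemma image_interval {f : ℕ →. ℕ} (hinj : ∀ ⦃x y a : ℕ⦄, a ∈ f x → a ∈ f y → x = y)
    (hedge : ∀ ⦃u v a b : ℕ⦄, a ∈ f u → b ∈ f v → adj u v → adj a b)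
    {I : Set ℕ} (hI : IsIntervalOf I f.Dom)
    {c1 c2 z : ℕ} (h1 : c1 ∈ f.image I) (h2 : c2 ∈ f.image I) (hlt1 : c1 < z)
    (hlt2 : z < c2) : z ∈ f.image I := by
  obtain ⟨x1, hx1, hc1⟩ := (PFun.mem_image f c1 I).mp h1
  obtain ⟨x2, hx2, hc2⟩ := (PFun.mem_image f c2 I).mp h2
  rcases le_total x1 x2 with h | h
  · exact image_between_le hinj hedge hI hx1 hx2 hc1 hc2 h (Or.inl ⟨hlt1, hlt2⟩)
  · exact image_between_le hinj hedge hI hx2 hx1 hc2 hc1 h (Or.inr ⟨hlt1, hlt2⟩)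

lemma maxInterval_empty {X : Set ℕ} (h : IsMaxIntervalOf (∅ : Set ℕ) X) : X = ∅ := by
  by_contra hne
  obtain ⟨x, hx⟩ := Set.nonempty_iff_ne_empty.mpr hne
  have hs : IsIntervalOf {x} X := by
    constructor
    · simpa using hx
    · intro u hu v hv z h1 h2
      simp only [Set.mem_singleton_iff] at hu hv
      omega
  have := h.2 {x} hs (Set.empty_subset _)
  exact (Set.singleton_ne_empty x) this.symm

lemma image_empty' (f : ℕ →. ℕ) : f.image (∅ : Set ℕ) = ∅ := by
  ext z
  simp [PFun.mem_image]

/-- Forward direction: one inclusion. -/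
lemma fwd_incl {n : ℕ} {α β γ δ : ℕ →. ℕ} (hα : IsIEnd n α) (hβ : IsIEnd n β)
    (hγ : IsIEnd n γ) (hδ : IsIEnd n δ)
    (h1 : α = pcomp γ β) (h2 : β = pcomp δ α) :
    {S : Set ℕ | ∃ I, IsMaxIntervalOf I α.Dom ∧ S = α.image I} ⊆
      {S : Set ℕ | ∃ I, IsMaxIntervalOf I β.Dom ∧ S = β.image I} := by
  have hmem1 : ∀ {x t : ℕ}, t ∈ α x ↔ ∃ c ∈ γ x, t ∈ β c := by
    intro x t; rw [h1]; exact mem_pcomp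
  have hmem2 : ∀ {x t : ℕ}, t ∈ β x ↔ ∃ c ∈ δ x, t ∈ α c := by
    intro x t; rw [h2]; exact mem_pcomp
  intro S hS
  obtain ⟨I, hImax, rfl⟩ := hS
  rcases Set.eq_empty_or_nonempty I with rfl | ⟨x0, hx0⟩
  · -- empty case
    have hαdom : α.Dom = ∅ := maxInterval_empty hImax
    have hβdom : β.Dom = ∅ := by
      ext x
      simp only [Set.mem_empty_iff_false, iff_false]
      intro hx
      obtain ⟨t, ht⟩ := (PFun.mem_dom β x).mp hx
      obtain ⟨c, hc, htc⟩ := hmem2.mp ht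
      have : c ∈ α.Dom := (PFun.mem_dom α c).mpr ⟨t, htc⟩
      rw [hαdom] at this
      exact this
    refine ⟨∅, ⟨⟨by simp, fun u hu v hv z h1 h2 => absurd hu (by simp)⟩, ?_⟩, ?_⟩
    · intro J hJ _
      have : J ⊆ (∅ : Set ℕ) := hβdom ▸ hJ.1
      exact (Set.subset_empty_iff.mp this).symm
    · rw [image_empty', image_empty']
  · -- nonempty case
    have hIsubα : I ⊆ α.Dom := hImax.1.1
    have hIsubγ : I ⊆ γ.Dom := by
      intro x hx
      obtain ⟨t, ht⟩ := (PFun.mem_dom α x).mp (hIsubα hx)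
      obtain ⟨c, hc, _⟩ := hmem1.mp ht
      exact (PFun.mem_dom γ x).mpr ⟨c, hc⟩
    have hIintγ : IsIntervalOf I γ.Dom := ⟨hIsubγ, hImax.1.2⟩
    -- K = γ(I)
    set K := γ.image I with hK
    have hKsubβ : K ⊆ β.Dom := by
      intro c hc
      obtain ⟨x, hx, hcx⟩ := (PFun.mem_image γ c I).mp hc
      obtain ⟨t, ht⟩ := (PFun.mem_dom α x).mp (hIsubα hx)
      obtain ⟨c', hc', htc⟩ := hmem1.mp ht
      have : c' = c := Part.mem_unique hc' hcx
      exact (PFun.mem_dom β c).mpr ⟨t, this ▸ htc⟩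
    have hKint : IsIntervalOf K β.Dom := by
      refine ⟨hKsubβ, fun u hu v hv z h1 h2 => ?_⟩
      exact image_interval hγ.inj hγ.edge hIintγ hu hv h1 h2
    obtain ⟨y0, hy0⟩ := (PFun.mem_dom γ x0).mp (hIsubγ hx0)
    have hy0K : y0 ∈ K := (PFun.mem_image γ y0 I).mpr ⟨x0, hx0, hy0⟩
    set J := MInt β.Dom y0 with hJ
    have hy0β : y0 ∈ β.Dom := hKsubβ hy0K
    have hJmax : IsMaxIntervalOf J β.Dom := isMax_MInt hy0β
    have hKJ : K ⊆ J := subset_MInt hKint hy0K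
    have hsub1 : α.image I ⊆ β.image J := by
      intro t ht
      obtain ⟨x, hx, htx⟩ := (PFun.mem_image α t I).mp ht
      obtain ⟨c, hc, htc⟩ := hmem1.mp htx
      have hcK : c ∈ K := (PFun.mem_image γ c I).mpr ⟨x, hx, hc⟩
      exact (PFun.mem_image β t J).mpr ⟨c, hKJ hcK, htc⟩
    -- now back: L = δ(J)
    have hJsubβ : J ⊆ β.Dom := hJmax.1.1
    have hJsubδ : J ⊆ δ.Dom := by
      intro y hy
      obtain ⟨t, ht⟩ := (PFun.mem_dom β y).mp (hJsubβ hy)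
      obtain ⟨c, hc, _⟩ := hmem2.mp ht
      exact (PFun.mem_dom δ y).mpr ⟨c, hc⟩
    have hJintδ : IsIntervalOf J δ.Dom := ⟨hJsubδ, hJmax.1.2⟩
    set L := δ.image J with hL
    have hLsubα : L ⊆ α.Dom := by
      intro c hc
      obtain ⟨y, hy, hcy⟩ := (PFun.mem_image δ c J).mp hc
      obtain ⟨t, ht⟩ := (PFun.mem_dom β y).mp (hJsubβ hy)
      obtain ⟨c', hc', htc⟩ := hmem2.mp ht
      have : c' = c := Part.mem_unique hc' hcy
      exact (PFun.mem_dom α c).mpr ⟨t, this ▸ htc⟩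
    have hLint : IsIntervalOf L α.Dom := by
      refine ⟨hLsubα, fun u hu v hv z h1 h2 => ?_⟩
      exact image_interval hδ.inj hδ.edge hJintδ hu hv h1 h2
    obtain ⟨z0, hz0⟩ := (PFun.mem_dom δ y0).mp (hJsubδ (hKJ hy0K))
    have hz0L : z0 ∈ L := (PFun.mem_image δ z0 J).mpr ⟨y0, hKJ hy0K, hz0⟩
    set I' := MInt α.Dom z0 with hI'
    have hI'max : IsMaxIntervalOf I' α.Dom := isMax_MInt (hLsubα hz0L)
    have hLI' : L ⊆ I' := subset_MInt hLint hz0L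
    have hsub2 : β.image J ⊆ α.image I' := by
      intro t ht
      obtain ⟨y, hy, hty⟩ := (PFun.mem_image β t J).mp ht
      obtain ⟨c, hc, htc⟩ := hmem2.mp hty
      have hcL : c ∈ L := (PFun.mem_image δ c J).mpr ⟨y, hy, hc⟩
      exact (PFun.mem_image α t I').mpr ⟨c, hLI' hcL, htc⟩
    -- I ⊆ I'
    have hII' : I ⊆ I' := by
      intro x hx
      obtain ⟨t, ht⟩ := (PFun.mem_dom α x).mp (hIsubα hx)
      have : t ∈ α.image I' := hsub2 (hsub1 ((PFun.mem_image α t I).mpr ⟨x, hx, ht⟩))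
      obtain ⟨x', hx', htx'⟩ := (PFun.mem_image α t I').mp this
      have : x = x' := hα.inj ht htx'
      exact this ▸ hx'
    have hIeq : I = I' := hImax.2 I' hI'max.1 hII'
    refine ⟨J, hJmax, Set.Subset.antisymm hsub1 ?_⟩
    intro t ht
    have : t ∈ α.image I' := hsub2 ht
    rwa [← hIeq] at this

/-- Backward direction: construct one of the two witnesses. -/
lemma half {n : ℕ} {α β : ℕ →. ℕ} (hα : IsIEnd n α) (hβ : IsIEnd n β)
    (h : ∀ I, IsMaxIntervalOf I α.Dom →
      ∃ J, IsMaxIntervalOf J β.Dom ∧ α.image I = β.image J) :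
    ∃ γ : ℕ →. ℕ, IsIEnd n γ ∧ α = pcomp γ β := by
  -- key fact: for any x with a ∈ α x, there is a max interval J of β.Dom with
  -- α.image (MInt α.Dom x) = β.image J, and a ∈ β.image J
  have key : ∀ {x a : ℕ}, a ∈ α x →
      ∃ J, IsMaxIntervalOf J β.Dom ∧ α.image (MInt α.Dom x) = β.image J ∧
        a ∈ β.image J := by
    intro x a ha
    have hx : x ∈ α.Dom := (PFun.mem_dom α x).mpr ⟨a, ha⟩
    obtain ⟨J, hJ, heq⟩ := h _ (isMax_MInt hx)
    refine ⟨J, hJ, heq, ?_⟩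
    rw [← heq]
    exact (PFun.mem_image α a _).mpr ⟨x, mem_MInt_self hx, ha⟩
  have keyran : ∀ {x a : ℕ}, a ∈ α x → ∃ c, a ∈ β c := by
    intro x a ha
    obtain ⟨J, _, _, haJ⟩ := key ha
    obtain ⟨c, _, hc⟩ := (PFun.mem_image β a J).mp haJ
    exact ⟨c, hc⟩
  set γ := pcomp α (pinv β) with hγdef
  have hmemγ : ∀ {x c : ℕ}, c ∈ γ x ↔ ∃ a ∈ α x, c ∈ pinv β a := fun {x c} => mem_pcomp
  have hγβ : ∀ {x c a : ℕ}, c ∈ γ x → a ∈ α x → a ∈ β c := by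
    intro x c a hc ha
    obtain ⟨a', ha', hc'⟩ := hmemγ.mp hc
    have : a' = a := Part.mem_unique ha' ha
    exact this ▸ pinv_spec hc'
  refine ⟨γ, ⟨?_, ?_, ?_, ?_⟩, ?_⟩
  · -- dom_subset
    intro x hx
    obtain ⟨c, hc⟩ := (PFun.mem_dom γ x).mp hx
    obtain ⟨a, ha, _⟩ := hmemγ.mp hc
    exact hα.dom_subset ((PFun.mem_dom α x).mpr ⟨a, ha⟩)
  · -- ran_subset
    intro c hc
    obtain ⟨x, hx⟩ := hc
    obtain ⟨a, ha, hc'⟩ := hmemγ.mp hx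
    have : a ∈ β c := pinv_spec hc'
    exact hβ.dom_subset ((PFun.mem_dom β c).mpr ⟨a, this⟩)
  · -- inj
    intro x y c hcx hcy
    obtain ⟨a, ha, hc1⟩ := hmemγ.mp hcx
    obtain ⟨a', ha', hc2⟩ := hmemγ.mp hcy
    have hb1 : a ∈ β c := pinv_spec hc1
    have hb2 : a' ∈ β c := pinv_spec hc2
    have : a = a' := Part.mem_unique hb1 hb2
    exact hα.inj ha (this ▸ ha')
  · -- edge
    intro u v c d hcu hdv huv
    obtain ⟨a, ha, hc1⟩ := hmemγ.mp hcu
    obtain ⟨b, hb, hd1⟩ := hmemγ.mp hdv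
    have hbc : a ∈ β c := pinv_spec hc1
    have hbd : b ∈ β d := pinv_spec hd1
    have hab : adj a b := hα.edge ha hb huv
    obtain ⟨J, hJmax, heq, haJ⟩ := key ha
    -- c ∈ J
    obtain ⟨c', hc'J, hac'⟩ := (PFun.mem_image β a J).mp haJ
    have hcJ : c ∈ J := (hβ.inj hbc hac') ▸ hc'J
    -- v ∈ MInt α.Dom u, hence b ∈ β.image J
    have hv : v ∈ α.Dom := (PFun.mem_dom α v).mpr ⟨b, hb⟩
    have hu : u ∈ α.Dom := (PFun.mem_dom α u).mpr ⟨a, ha⟩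
    have hvM : v ∈ MInt α.Dom u := by
      intro w hw
      simp only [Set.mem_Icc] at hw
      rcases huv with h' | h'
      · have : w = u ∨ w = v := by omega
        rcases this with rfl | rfl
        · exact hu
        · exact hv
      · have : w = u ∨ w = v := by omega
        rcases this with rfl | rfl
        · exact hu
        · exact hv
    have hbJ : b ∈ β.image J := by
      rw [← heq]
      exact (PFun.mem_image α b _).mpr ⟨v, hvM, hb⟩
    obtain ⟨d', hd'J, hbd'⟩ := (PFun.mem_image β b J).mp hbJ
    have hdJ : d ∈ J := (hβ.inj hbd hbd') ▸ hd'J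
    have hJint : IsIntervalOf J β.Dom := hJmax.1
    exact adj_reflect hβ.inj hβ.edge hJint hcJ hdJ hbc hbd hab
  · -- α = pcomp γ β
    apply PFun.ext
    intro x a
    constructor
    · intro ha
      have hex : ∃ c, a ∈ β c := keyran ha
      have hc : hex.choose ∈ pinv β a := mem_pinv_of hex
      have hcγ : hex.choose ∈ γ x := hmemγ.mpr ⟨a, ha, hc⟩
      exact mem_pcomp.mpr ⟨hex.choose, hcγ, hex.choose_spec⟩
    · intro ha
      obtain ⟨c, hcγ, hac⟩ := mem_pcomp.mp ha
      obtain ⟨a', ha', hc'⟩ := hmemγ.mp hcγ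
      have hb : a' ∈ β c := pinv_spec hc'
      have : a' = a := Part.mem_unique hb hac
      exact this ▸ ha'

theorem stmt8 (n : ℕ) (α β : ℕ →. ℕ) (hα : IsIEnd n α) (hβ : IsIEnd n β) :
    (∃ γ δ : ℕ →. ℕ, IsIEnd n γ ∧ IsIEnd n δ ∧ α = pcomp γ β ∧ β = pcomp δ α) ↔
    {S : Set ℕ | ∃ I, IsMaxIntervalOf I α.Dom ∧ S = α.image I} =
      {S : Set ℕ | ∃ I, IsMaxIntervalOf I β.Dom ∧ S = β.image I} := by
  constructor
  · rintro ⟨γ, δ, hγ, hδ, h1, h2⟩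
    exact Set.Subset.antisymm (fwd_incl hα hβ hγ hδ h1 h2) (fwd_incl hβ hα hδ hγ h2 h1)
  · intro h
    have h1 : ∀ I, IsMaxIntervalOf I α.Dom →
        ∃ J, IsMaxIntervalOf J β.Dom ∧ α.image I = β.image J := by
      intro I hI
      have : α.image I ∈ {S : Set ℕ | ∃ I, IsMaxIntervalOf I α.Dom ∧ S = α.image I} :=
        ⟨I, hI, rfl⟩
      rw [h] at this
      obtain ⟨J, hJ, heq⟩ := this
      exact ⟨J, hJ, heq⟩
    have h2 : ∀ I, IsMaxIntervalOf I β.Dom →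
        ∃ J, IsMaxIntervalOf J α.Dom ∧ β.image I = α.image J := by
      intro I hI
      have : β.image I ∈ {S : Set ℕ | ∃ I, IsMaxIntervalOf I β.Dom ∧ S = β.image I} :=
        ⟨I, hI, rfl⟩
      rw [← h] at this
      obtain ⟨J, hJ, heq⟩ := this
      exact ⟨J, hJ, heq⟩
    obtain ⟨γ, hγ, hγc⟩ := half hα hβ h1
    obtain ⟨δ, hδ, hδc⟩ := half hβ hα h2
    exact ⟨γ, δ, hγ, hδ, hγc, hδc⟩
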